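/- arXiv:2205.07327 — 2 statements merged into one kernel-verified Lean document; each statement's English description precedes it below -/
import Mathlib

section
/- For every r ∈ I_1^m ∪ I_2^m and every q with q_n ≠ 0, the weighted divergence of the vector field J_r vanishes: Σ_{j=1}^n ∂J_r^j/∂q_j − (m/2) q_n^{−1} J_r^n = 0. (Equivalently, the zero-order term of the minimal quantization of W_r = Σ_j J_r^j p_j vanishes.) -/
noncomputable section

open scoped BigOperators

namespace P3

/-- Extended coordinates: `q_0 = 1`, `q_k = 0` for `k < 0` or `k > n`. -/
def qe (n : ℕ) (q : Fin n → ℝ) (k : ℤ) : ℝ :=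
  if h : 1 ≤ k ∧ k ≤ (n : ℤ) then q ⟨(k - 1).toNat, by omega⟩
  else if k = 0 then 1 else 0

/-- The special conformal Killing tensor `L` in Viète coordinates. -/
def Lmat (n : ℕ) (q : Fin n → ℝ) : Matrix (Fin n) (Fin n) ℝ :=
  Matrix.of fun i j => if (j : ℕ) = 0 then -q i else if (j : ℕ) = (i : ℕ) + 1 then 1 else 0

/-- The metric `G_0` (case `m = 0`) in Viète coordinates. -/
def G0mat (n : ℕ) (q : Fin n → ℝ) : Matrix (Fin n) (Fin n) ℝ :=
  Matrix.of fun i j => qe n q ((i : ℤ) + (j : ℤ) + 1 - (n : ℤ))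

/-- The contravariant metric `G = L^m G_0`. -/
def Gmat (n m : ℕ) (q : Fin n → ℝ) : Matrix (Fin n) (Fin n) ℝ :=
  (Lmat n q) ^ m * G0mat n q

/-- Killing tensors `K_r = Σ_{k=0}^{r-1} q_k L^{r-1-k}` (so `K_1 = Id`). -/
def Kmat (n : ℕ) (q : Fin n → ℝ) (r : ℕ) : Matrix (Fin n) (Fin n) ℝ :=
  ∑ k ∈ Finset.range r, qe n q (k : ℤ) • (Lmat n q) ^ (r - 1 - k)

/-- `A_r = K_r G`, with `A_i = 0` for `i ≤ 0` or `i > n`. -/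
def Amat (n m : ℕ) (q : Fin n → ℝ) (r : ℤ) : Matrix (Fin n) (Fin n) ℝ :=
  if 1 ≤ r ∧ r ≤ (n : ℤ) then Kmat n q r.toNat * Gmat n m q else 0

/-- Entries of `A_r` with 1-based integer indices (0 outside the valid range). -/
def Aent (n m : ℕ) (q : Fin n → ℝ) (r k j : ℤ) : ℝ :=
  if hk : 1 ≤ k ∧ k ≤ (n : ℤ) then
    if hj : 1 ≤ j ∧ j ≤ (n : ℤ) then
      Amat n m q r ⟨(k - 1).toNat, by omega⟩ ⟨(j - 1).toNat, by omega⟩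
    else 0
  else 0

/-- `r ∈ I_1^m = {2,…,n−m+1} ∩ {2,…,n}`. -/
def inI1 (n m : ℕ) (r : ℤ) : Prop := 2 ≤ r ∧ r ≤ (n : ℤ) - m + 1 ∧ r ≤ (n : ℤ)

/-- `r ∈ I_2^m = {n−m+2,…,n}`. -/
def inI2 (n m : ℕ) (r : ℤ) : Prop := (n : ℤ) - m + 2 ≤ r ∧ r ≤ (n : ℤ)

instance (n m : ℕ) (r : ℤ) : Decidable (inI1 n m r) := by unfold inI1; infer_instance
instance (n m : ℕ) (r : ℤ) : Decidable (inI2 n m r) := by unfold inI2; infer_instance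

/-- Components `J_r^k` (1-based integer component index `k`) of the Killing
vector fields `J_r`; `J_1 = 0` and `J_i = 0` for `i ≤ 0` or `i > n`. -/
def Jcomp (n m : ℕ) (r : ℤ) (q : Fin n → ℝ) (k : ℤ) : ℝ :=
  if r = 1 then 0
  else if inI1 n m r then
    if (n : ℤ) + 2 - m - r ≤ k ∧ k ≤ (n : ℤ) - m then
      (((n : ℤ) + 1 - m - k : ℤ) : ℝ) * qe n q ((m : ℤ) + r - n - 2 + k)
    else 0
  else if inI2 n m r then
    if (n : ℤ) + 2 - m ≤ k ∧ k ≤ 2 * (n : ℤ) + 2 - m - r then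
      -((((n : ℤ) + 1 - m - k : ℤ) : ℝ) * qe n q ((m : ℤ) + r - n - 2 + k))
    else 0
  else 0

/-- Basic separable potentials for `α ≥ n-1`:  `Vup d = V^{(n-1+d)}`,
via the forward recursion `V_r^{(α+1)} = V_{r+1}^{(α)} − q_r V_1^{(α)}`. -/
def Vup (n : ℕ) (q : Fin n → ℝ) : ℕ → ℤ → ℝ
  | 0 => fun r => if r = 1 then -1 else 0
  | d + 1 => fun r =>
      if 1 ≤ r ∧ r ≤ (n : ℤ) then Vup n q d (r + 1) - qe n q r * Vup n q d 1 else 0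

/-- Basic separable potentials for `α ≤ 0`: `Vdn d = V^{(-d)}`, via the inverse
recursion `V_1^{(α)} = −q_n^{−1} V_n^{(α+1)}`, `V_{r+1}^{(α)} = V_r^{(α+1)} + q_r V_1^{(α)}`. -/
def Vdn (n : ℕ) (q : Fin n → ℝ) : ℕ → ℤ → ℝ
  | 0 => fun r => if r = (n : ℤ) then -1 else 0
  | d + 1 => fun r =>
      if 1 ≤ r ∧ r ≤ (n : ℤ) then
        (if r = 1 then 0 else Vdn n q d (r - 1))
          + qe n q (r - 1) * (-(qe n q (n : ℤ))⁻¹ * Vdn n q d (n : ℤ))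
      else 0

/-- The basic separable potential `V_r^{(α)}` (1-based integer index `r`). -/
def Vpot (n : ℕ) (q : Fin n → ℝ) (α r : ℤ) : ℝ :=
  if 0 ≤ α then
    if α ≤ (n : ℤ) - 1 then (if r = (n : ℤ) - α then -1 else 0)
    else Vup n q (α - ((n : ℤ) - 1)).toNat r
  else Vdn n q (-α).toNat r

/-- The basic separable vector potential component `(P_r^{(γ)})^j`
(1-based integer indices `r`, `j`). -/
def Ppot (n : ℕ) (q : Fin n → ℝ) (γ r j : ℤ) : ℝ :=
  -∑ s ∈ Finset.range r.toNat, qe n q (s : ℤ) * Vpot n q (r + γ - (s : ℤ) - 1) j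

/-- Partial derivative `∂f/∂q_j` of a real-valued function on `ℝ^n`. -/
def pd (n : ℕ) (j : Fin n) (f : (Fin n → ℝ) → ℝ) (x : Fin n → ℝ) : ℝ :=
  fderiv ℝ f x (Pi.single j 1)

/-- Partial derivative `∂f/∂q_j` of a complex-valued function on `ℝ^n`. -/
def pdC (n : ℕ) (j : Fin n) (f : (Fin n → ℝ) → ℂ) (x : Fin n → ℝ) : ℂ :=
  fderiv ℝ f x (Pi.single j 1)

/-- Partial derivative in the `q_i` direction on phase space `ℝ^{2n}`. -/
def pdq (n : ℕ) (i : Fin n) (f : ((Fin n → ℝ) × (Fin n → ℝ)) → ℝ)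
    (x : (Fin n → ℝ) × (Fin n → ℝ)) : ℝ :=
  fderiv ℝ f x (Pi.single i 1, 0)

/-- Partial derivative in the `p_i` direction on phase space `ℝ^{2n}`. -/
def pdp (n : ℕ) (i : Fin n) (f : ((Fin n → ℝ) × (Fin n → ℝ)) → ℝ)
    (x : (Fin n → ℝ) × (Fin n → ℝ)) : ℝ :=
  fderiv ℝ f x (0, Pi.single i 1)

/-- Canonical Poisson bracket on `ℝ^{2n}`. -/
def pbr (n : ℕ) (f g : ((Fin n → ℝ) × (Fin n → ℝ)) → ℝ)
    (x : (Fin n → ℝ) × (Fin n → ℝ)) : ℝ :=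
  ∑ i : Fin n, (pdq n i f x * pdp n i g x - pdp n i f x * pdq n i g x)

/-- Classical geodesic Stäckel Hamiltonian `E_r = ½ pᵀ A_r p`. -/
def Ecl (n m : ℕ) (r : ℤ) (x : (Fin n → ℝ) × (Fin n → ℝ)) : ℝ :=
  (1 / 2) * ∑ k : Fin n, ∑ j : Fin n,
    x.2 k * Aent n m x.1 r ((k : ℤ) + 1) ((j : ℤ) + 1) * x.2 j

/-- Classical quasi-Stäckel term `W_r = Σ_j J_r^j p_j`. -/
def Wcl (n m : ℕ) (r : ℤ) (x : (Fin n → ℝ) × (Fin n → ℝ)) : ℝ :=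
  ∑ j : Fin n, Jcomp n m r x.1 ((j : ℤ) + 1) * x.2 j

/-- Geodesic quasi-Stäckel Hamiltonian `𝓔_r = E_r + W_r`. -/
def EWcl (n m : ℕ) (r : ℤ) (x : (Fin n → ℝ) × (Fin n → ℝ)) : ℝ :=
  Ecl n m r x + Wcl n m r x

/-- Classical magnetic term `M_r^{(γ)} = Σ_k (P_r^{(γ)})^k p_k`. -/
def Mcl (n : ℕ) (γ r : ℤ) (x : (Fin n → ℝ) × (Fin n → ℝ)) : ℝ :=
  ∑ k : Fin n, Ppot n x.1 γ r ((k : ℤ) + 1) * x.2 k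

/-- The open set `Ω = {q : q_n ≠ 0}`. -/
def Omega (n : ℕ) : Set (Fin n → ℝ) := {x | qe n x (n : ℤ) ≠ 0}

/-- Minimal quantization `Ê_r` of the geodesic part, written with the
derivatives to the right. -/
def Eop (n m : ℕ) (hb : ℝ) (r : ℤ) (f : (Fin n → ℝ) → ℂ) (x : Fin n → ℝ) : ℂ :=
  -(((hb : ℂ)) ^ 2 / 2) *
    ((∑ k : Fin n, ∑ j : Fin n,
        ((Aent n m x r ((k : ℤ) + 1) ((j : ℤ) + 1) : ℝ) : ℂ) *
          pdC n k (fun y => pdC n j f y) x)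
      + (∑ j : Fin n,
          ((∑ k : Fin n, pd n k (fun y => Aent n m y r ((k : ℤ) + 1) ((j : ℤ) + 1)) x : ℝ) : ℂ) *
            pdC n j f x)
      - ((m : ℂ) / 2) * (((qe n x (n : ℤ) : ℝ) : ℂ))⁻¹ *
          ∑ j : Fin n, ((Aent n m x r (n : ℤ) ((j : ℤ) + 1) : ℝ) : ℂ) * pdC n j f x)

/-- Minimal quantization `Ŵ_r = −iħ Σ_j J_r^j ∂_j`. -/
def Wop (n m : ℕ) (hb : ℝ) (r : ℤ) (f : (Fin n → ℝ) → ℂ) (x : Fin n → ℝ) : ℂ :=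
  -(Complex.I * (hb : ℂ)) * ∑ j : Fin n, ((Jcomp n m r x ((j : ℤ) + 1) : ℝ) : ℂ) * pdC n j f x

/-- Quantized geodesic quasi-Stäckel Hamiltonian `𝓔̂_r = Ê_r + Ŵ_r`. -/
def EWop (n m : ℕ) (hb : ℝ) (r : ℤ) (f : (Fin n → ℝ) → ℂ) (x : Fin n → ℝ) : ℂ :=
  Eop n m hb r f x + Wop n m hb r f x

/-- Minimal quantization `M̂_r^{(γ)}` of the magnetic term. -/
def Mop (n m : ℕ) (hb : ℝ) (γ r : ℤ) (f : (Fin n → ℝ) → ℂ) (x : Fin n → ℝ) : ℂ :=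
  -(Complex.I * (hb : ℂ) / 2) *
    ((∑ j : Fin n, pdC n j (fun y => ((Ppot n y γ r ((j : ℤ) + 1) : ℝ) : ℂ) * f y) x)
      + (∑ j : Fin n, ((Ppot n x γ r ((j : ℤ) + 1) : ℝ) : ℂ) * pdC n j f x)
      - ((m : ℂ) / 2) * (((qe n x (n : ℤ) : ℝ) : ℂ))⁻¹ *
          ((Ppot n x γ r (n : ℤ) : ℝ) : ℂ) * f x)

end P3


namespace P3

lemma pd_const (n : ℕ) (j : Fin n) (c : ℝ) (x : Fin n → ℝ) :
    pd n j (fun _ => c) x = 0 := by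
  unfold pd; rw [fderiv_fun_const]; simp

lemma pd_coord (n : ℕ) (j i : Fin n) (x : Fin n → ℝ) :
    pd n j (fun y => y i) x = if i = j then 1 else 0 := by
  unfold pd
  have h : (fun y : Fin n → ℝ => y i) = (ContinuousLinearMap.proj i : (Fin n → ℝ) →L[ℝ] ℝ) := rfl
  rw [h, ContinuousLinearMap.fderiv]
  simp [ContinuousLinearMap.proj_apply, Pi.single_apply]

lemma diff_qe (n : ℕ) (t : ℤ) (x : Fin n → ℝ) :
    DifferentiableAt ℝ (fun y => qe n y t) x := by
  by_cases h : 1 ≤ t ∧ t ≤ (n : ℤ)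
  · have he : (fun y : Fin n → ℝ => qe n y t) =
        (ContinuousLinearMap.proj ⟨(t-1).toNat, by omega⟩ : (Fin n → ℝ) →L[ℝ] ℝ) := by
      funext y; simp [qe, h]
    rw [he]
    exact (ContinuousLinearMap.proj (R := ℝ) (φ := fun _ : Fin n => ℝ)
      (⟨(t-1).toNat, by omega⟩ : Fin n)).differentiableAt
  · have he : (fun y : Fin n → ℝ => qe n y t) = fun _ => (if t = 0 then (1:ℝ) else 0) := by
      funext y; simp [qe, h]
    rw [he]; exact differentiableAt_const _

lemma pd_qe (n : ℕ) (j : Fin n) (t : ℤ) (x : Fin n → ℝ) :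
    pd n j (fun y => qe n y t) x = if t = (j:ℤ) + 1 then 1 else 0 := by
  by_cases h : 1 ≤ t ∧ t ≤ (n : ℤ)
  · have he : (fun y : Fin n → ℝ => qe n y t) =
        (fun y => y (⟨(t-1).toNat, by omega⟩ : Fin n)) := by
      funext y; simp [qe, h]
    rw [he, pd_coord]
    have hj := j.isLt
    congr 1
    simp only [Fin.ext_iff, eq_iff_iff]
    constructor <;> intro hh <;> omega
  · have he : (fun y : Fin n → ℝ => qe n y t) = fun _ => (if t = 0 then (1:ℝ) else 0) := by
      funext y; simp [qe, h]
    rw [he, pd_const, if_neg]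
    have hj := j.isLt
    omega

lemma pd_cmul_qe (n : ℕ) (j : Fin n) (c : ℝ) (t : ℤ) (x : Fin n → ℝ) :
    pd n j (fun y => c * qe n y t) x = c * (if t = (j:ℤ) + 1 then 1 else 0) := by
  unfold pd
  rw [fderiv_const_mul (diff_qe n t x)]
  simp only [ContinuousLinearMap.coe_smul', Pi.smul_apply, smul_eq_mul]
  congr 1
  exact pd_qe n j t x

lemma gauss_sum (k : ℕ) : ∑ i ∈ Finset.range k, ((i:ℝ)+1) = (k:ℝ)*((k:ℝ)+1)/2 := by
  induction k with
  | zero => simp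
  | succ k ih => rw [Finset.sum_range_succ, ih]; push_cast; ring

lemma sum_aux (n m : ℕ) (hm2 : 2 ≤ m) (hmn : m ≤ n + 1) :
    ∑ j : Fin n, (if (n:ℤ) + 2 - m ≤ (j:ℤ) + 1 then (((j:ℤ) + 1 - ((n:ℤ) + 1 - m)) : ℝ) else 0)
      = (m : ℝ) * ((m:ℝ) - 1) / 2 := by
  rw [Fin.sum_univ_eq_sum_range
    (fun i : ℕ => if (n:ℤ)+2-m ≤ (i:ℤ)+1 then (((i:ℤ)+1-((n:ℤ)+1-m)):ℝ) else 0)]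
  have ha : n + 1 - m ≤ n := by omega
  rw [← Finset.sum_range_add_sum_Ico _ ha]
  have h1 : ∑ i ∈ Finset.range (n+1-m),
      (if (n:ℤ)+2-m ≤ (i:ℤ)+1 then (((i:ℤ)+1-((n:ℤ)+1-m)):ℝ) else 0) = 0 := by
    apply Finset.sum_eq_zero
    intro i hi
    rw [Finset.mem_range] at hi
    rw [if_neg (by omega)]
  rw [h1, zero_add, Finset.sum_Ico_eq_sum_range]
  have hnm : n - (n + 1 - m) = m - 1 := by omega
  rw [hnm]
  have h2 : ∀ i ∈ Finset.range (m-1),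
      (if (n:ℤ)+2-m ≤ ((n+1-m+i : ℕ):ℤ)+1 then ((((n+1-m+i:ℕ):ℤ)+1-((n:ℤ)+1-m)):ℝ) else 0)
        = (i:ℝ) + 1 := by
    intro i hi
    rw [if_pos (by omega)]
    push_cast [Nat.cast_sub (show m ≤ n+1 from hmn)]; ring
  rw [Finset.sum_congr rfl h2, gauss_sum]
  have hc : ((m-1:ℕ):ℝ) = (m:ℝ) - 1 := by
    rw [Nat.cast_sub (by omega : 1 ≤ m)]; simp
  rw [hc]; ring

end P3

namespace P3

/-- For `r ∈ I_1^m ∪ I_2^m` and `q_n ≠ 0`, the weighted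
divergence of `J_r` vanishes:
`Σ_j ∂J_r^j/∂q_j − (m/2) q_n⁻¹ J_r^n = 0`. -/
theorem weighted_divergence_J_vanishes (n m : ℕ) (hn : 1 ≤ n) (hm : m ≤ n + 1)
    (r : ℤ) (hr : inI1 n m r ∨ inI2 n m r)
    (q : Fin n → ℝ) (hq : qe n q (n : ℤ) ≠ 0) :
    (∑ j : Fin n, pd n j (fun y => Jcomp n m r y ((j : ℤ) + 1)) q)
      - ((m : ℝ) / 2) * (qe n q (n : ℤ))⁻¹ * Jcomp n m r q (n : ℤ) = 0 := by
  rcases hr with h1 | h2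
  · -- Case r ∈ I₁
    have hA := h1.1
    have hB := h1.2.1
    have hC := h1.2.2
    have hrne1 : r ≠ 1 := by omega
    have key : ∀ j : Fin n, pd n j (fun y => Jcomp n m r y ((j:ℤ)+1)) q = 0 := by
      intro j
      by_cases hc : ((n:ℤ) + 2 - m - r ≤ (j:ℤ) + 1 ∧ (j:ℤ) + 1 ≤ (n:ℤ) - m)
      · have hfun : (fun y => Jcomp n m r y ((j:ℤ)+1))
            = fun y => ((((n:ℤ) + 1 - m - ((j:ℤ)+1) : ℤ)) : ℝ)
                * qe n y ((m:ℤ) + r - n - 2 + ((j:ℤ)+1)) := by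
          funext y
          simp only [Jcomp]
          rw [if_neg hrne1, if_pos h1, if_pos hc]
        rw [hfun, pd_cmul_qe, if_neg (by omega), mul_zero]
      · have hfun : (fun y => Jcomp n m r y ((j:ℤ)+1)) = fun _ => (0:ℝ) := by
          funext y
          simp only [Jcomp]
          rw [if_neg hrne1, if_pos h1, if_neg hc]
        rw [hfun, pd_const]
    rw [Finset.sum_eq_zero (fun j _ => key j)]
    by_cases hm0 : m = 0
    · subst hm0; simp
    · have hJ : Jcomp n m r q (n:ℤ) = 0 := by
        simp only [Jcomp]
        rw [if_neg hrne1, if_pos h1, if_neg (by omega)]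
      rw [hJ]; ring
  · -- Case r ∈ I₂
    have hlo := h2.1
    have hhi := h2.2
    have hnotI1 : ¬ inI1 n m r := by unfold inI1; omega
    by_cases hr1 : r = 1
    · have key : ∀ j : Fin n, pd n j (fun y => Jcomp n m r y ((j:ℤ)+1)) q = 0 := by
        intro j
        have hfun : (fun y => Jcomp n m r y ((j:ℤ)+1)) = fun _ => (0:ℝ) := by
          funext y; simp only [Jcomp]; rw [if_pos hr1]
        rw [hfun, pd_const]
      have hJ : Jcomp n m r q (n:ℤ) = 0 := by
        simp only [Jcomp]; rw [if_pos hr1]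
      rw [Finset.sum_eq_zero (fun j _ => key j), hJ]; ring
    · by_cases hre : r = (n:ℤ) + 2 - m
      · -- interesting case
        have hm2 : 2 ≤ m := by omega
        have key : ∀ j : Fin n, pd n j (fun y => Jcomp n m r y ((j:ℤ)+1)) q
            = (if (n:ℤ) + 2 - m ≤ (j:ℤ) + 1 then (((j:ℤ) + 1 - ((n:ℤ) + 1 - m)) : ℝ) else 0) := by
          intro j
          have hj := j.isLt
          by_cases hc : ((n:ℤ) + 2 - m ≤ (j:ℤ) + 1 ∧ (j:ℤ) + 1 ≤ 2 * (n:ℤ) + 2 - m - r)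
          · have hfun : (fun y => Jcomp n m r y ((j:ℤ)+1))
                = fun y => (-((((n:ℤ) + 1 - m - ((j:ℤ)+1) : ℤ)) : ℝ))
                    * qe n y ((m:ℤ) + r - n - 2 + ((j:ℤ)+1)) := by
              funext y
              simp only [Jcomp]
              rw [if_neg hr1, if_neg hnotI1, if_pos h2, if_pos hc]
              ring
            rw [hfun, pd_cmul_qe, if_pos (by omega : (m:ℤ) + r - n - 2 + ((j:ℤ)+1) = (j:ℤ) + 1),
              if_pos hc.1, mul_one]
            push_cast; ring
          · have hfun : (fun y => Jcomp n m r y ((j:ℤ)+1)) = fun _ => (0:ℝ) := by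
              funext y
              simp only [Jcomp]
              rw [if_neg hr1, if_neg hnotI1, if_pos h2, if_neg hc]
            rw [hfun, pd_const, if_neg (by omega)]
        rw [Finset.sum_congr rfl (fun j _ => key j), sum_aux n m hm2 hm]
        have hJ : Jcomp n m r q (n:ℤ) = ((m:ℝ) - 1) * qe n q (n:ℤ) := by
          simp only [Jcomp]
          rw [if_neg hr1, if_neg hnotI1, if_pos h2, if_pos (by omega)]
          have ht : (m:ℤ) + r - (n:ℤ) - 2 + (n:ℤ) = (n:ℤ) := by omega
          rw [ht]
          push_cast; ring
        rw [hJ]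
        field_simp
        ring
      · have key : ∀ j : Fin n, pd n j (fun y => Jcomp n m r y ((j:ℤ)+1)) q = 0 := by
          intro j
          by_cases hc : ((n:ℤ) + 2 - m ≤ (j:ℤ) + 1 ∧ (j:ℤ) + 1 ≤ 2 * (n:ℤ) + 2 - m - r)
          · have hfun : (fun y => Jcomp n m r y ((j:ℤ)+1))
                = fun y => (-((((n:ℤ) + 1 - m - ((j:ℤ)+1) : ℤ)) : ℝ))
                    * qe n y ((m:ℤ) + r - n - 2 + ((j:ℤ)+1)) := by
              funext y
              simp only [Jcomp]
              rw [if_neg hr1, if_neg hnotI1, if_pos h2, if_pos hc]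
              ring
            rw [hfun, pd_cmul_qe, if_neg (by omega), mul_zero]
          · have hfun : (fun y => Jcomp n m r y ((j:ℤ)+1)) = fun _ => (0:ℝ) := by
              funext y
              simp only [Jcomp]
              rw [if_neg hr1, if_neg hnotI1, if_pos h2, if_neg hc]
            rw [hfun, pd_const]
        have hJ : Jcomp n m r q (n:ℤ) = 0 := by
          simp only [Jcomp]
          rw [if_neg hr1, if_neg hnotI1, if_pos h2, if_neg (by omega)]
        rw [Finset.sum_eq_zero (fun j _ => key j), hJ]; ring


end P3
end
end

section
/- For every γ ∈ {0,…,n+1}, every r ∈ {1,…,n}, and every q with q_n ≠ 0, the weighted divergence of the basic separable vector potential P_r^{(γ)} satisfies: Σ_{j=1}^n ∂(P_r^{(γ)})^j/∂q_j − (m/2) q_n^{−1} (P_r^{(γ)})^n = (γ − m/2) V_r^{(γ−1)}. -/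
noncomputable section

open scoped BigOperators

namespace P3

def hh (n : ℕ) (q : Fin n → ℝ) : ℕ → ℝ
  | 0 => 1
  | e + 1 => -∑ s ∈ Finset.range (e + 1), qe n q ((s : ℤ) + 1) * hh n q (e - s)
  termination_by e => e
  decreasing_by omega

def hz (n : ℕ) (q : Fin n → ℝ) (t : ℤ) : ℝ := if 0 ≤ t then hh n q t.toNat else 0

def Cz (n : ℕ) (q : Fin n → ℝ) (t : ℤ) : ℝ :=
  ∑ a ∈ Finset.range (t.toNat + 1), hz n q (a : ℤ) * hz n q (t - a)

variable (n : ℕ) (q : Fin n → ℝ)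

lemma qe_zero : qe n q 0 = 1 := by simp [qe]

lemma qe_out {k : ℤ} (h : ¬(1 ≤ k ∧ k ≤ (n:ℤ))) (h0 : k ≠ 0) : qe n q k = 0 := by
  simp [qe, h, h0]

lemma hz_neg {t : ℤ} (h : t < 0) : hz n q t = 0 := by simp [hz]; omega

lemma hz_zero : hz n q 0 = 1 := by simp [hz, hh]

lemma hz_ofNat (e : ℕ) : hz n q (e : ℤ) = hh n q e := by simp [hz]

/-- generic truncation of range sums when tails vanish -/
lemma sum_range_ext (f : ℕ → ℝ) {N M : ℕ} (hNM : N ≤ M)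
    (h : ∀ s, N ≤ s → f s = 0) :
    ∑ s ∈ Finset.range N, f s = ∑ s ∈ Finset.range M, f s := by
  apply Finset.sum_subset (Finset.range_subset_range.2 hNM)
  intro x _ hx
  exact h x (by simpa using hx)

lemma Cz_neg {t : ℤ} (h : t < 0) : Cz n q t = 0 := by
  unfold Cz
  apply Finset.sum_eq_zero
  intro a _
  rw [hz_neg n q (by omega : t - (a:ℤ) < 0), mul_zero]

/-- master recurrence -/
lemma master (t : ℤ) :
    ∑ s ∈ Finset.range (n + 1), qe n q (s : ℤ) * hz n q (t - s) =
      if t = 0 then 1 else 0 := by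
  rcases lt_or_ge t 0 with ht | ht
  · rw [if_neg (by omega)]
    apply Finset.sum_eq_zero
    intro s _
    rw [hz_neg n q (by omega : t - (s:ℤ) < 0), mul_zero]
  · obtain ⟨e, rfl⟩ : ∃ e : ℕ, t = (e : ℤ) := ⟨t.toNat, by omega⟩
    match e with
    | 0 =>
      simp only [Nat.cast_zero]
      rw [if_pos trivial]
      rw [Finset.sum_eq_single 0]
      · simp [qe_zero, hz_zero]
      · intro s _ hs
        rw [hz_neg n q (by omega : (0:ℤ) - (s:ℤ) < 0), mul_zero]
      · simp
    | e + 1 =>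
      rw [if_neg (by omega)]
      rw [Finset.sum_range_succ']
      have h0 : qe n q ((0:ℕ):ℤ) * hz n q (((e:ℤ)+1) - (0:ℕ)) = hz n q ((e:ℤ)+1) := by
        simpa using by rw [qe_zero]; ring
      -- compute hz (e+1)
      have hdef : hz n q ((e:ℤ)+1) =
          -∑ s ∈ Finset.range (e + 1), qe n q ((s : ℤ) + 1) * hz n q ((e:ℤ) - s) := by
        have : ((e:ℤ)+1) = ((e+1 : ℕ) : ℤ) := by push_cast; ring
        rw [this, hz_ofNat, hh]
        congr 1
        apply Finset.sum_congr rfl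
        intro s hs
        have hs' : s ≤ e := by simpa [Nat.lt_succ_iff] using hs
        congr 1
        rw [hz]
        rw [if_pos (by omega : (0:ℤ) ≤ (e:ℤ) - s)]
        congr 1
        omega
      -- the shifted sum over range n equals the one over range (e+1)
      have hext : ∑ s ∈ Finset.range n, qe n q ((s:ℤ) + 1) * hz n q (((e:ℤ)+1) - ((s:ℕ)+1)) =
          ∑ s ∈ Finset.range (e+1), qe n q ((s:ℤ) + 1) * hz n q ((e:ℤ) - s) := by
      -- both equal sum over range (max n (e+1))
        have key : ∀ (M : ℕ), n ≤ M → e + 1 ≤ M →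
            ∑ s ∈ Finset.range M, qe n q ((s:ℤ)+1) * hz n q ((e:ℤ) - s) =
            ∑ s ∈ Finset.range M, qe n q ((s:ℤ)+1) * hz n q ((e:ℤ) - s) := fun _ _ _ => rfl
        have e1 : ∑ s ∈ Finset.range n, qe n q ((s:ℤ) + 1) * hz n q (((e:ℤ)+1) - ((s:ℕ)+1)) =
            ∑ s ∈ Finset.range (max n (e+1)), qe n q ((s:ℤ)+1) * hz n q ((e:ℤ) - s) := by
          have : ∀ s:ℕ, (((e:ℤ)+1) - ((s:ℕ)+1)) = (e:ℤ) - s := by intro s; push_cast; ring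
          simp_rw [this]
          apply sum_range_ext _ (le_max_left _ _)
          intro s hs
          rw [qe_out n q (by push_cast; omega) (by push_cast; omega), zero_mul]
        have e2 : ∑ s ∈ Finset.range (e+1), qe n q ((s:ℤ) + 1) * hz n q ((e:ℤ) - s) =
            ∑ s ∈ Finset.range (max n (e+1)), qe n q ((s:ℤ)+1) * hz n q ((e:ℤ) - s) := by
          apply sum_range_ext _ (le_max_right _ _)
          intro s hs
          rw [hz_neg n q (by omega : (e:ℤ) - s < 0), mul_zero]
        rw [e1, e2]
      push_cast at h0 hext ⊢
      rw [h0, hext, hdef]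
      ring

end P3

namespace P3
variable (n : ℕ) (q : Fin n → ℝ)

lemma master_trunc (t : ℤ) (N : ℕ) (h : n < N ∨ t < (N : ℤ)) :
    ∑ s ∈ Finset.range N, qe n q (s : ℤ) * hz n q (t - s) =
      if t = 0 then 1 else 0 := by
  rw [← master n q t]
  have e1 : ∑ s ∈ Finset.range (n+1), qe n q (s : ℤ) * hz n q (t - s) =
      ∑ s ∈ Finset.range (max N (n+1)), qe n q (s : ℤ) * hz n q (t - s) := by
    apply sum_range_ext _ (le_max_right _ _)
    intro s hs
    rw [qe_out n q (by push_cast; omega) (by push_cast; omega), zero_mul]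
  have e2 : ∑ s ∈ Finset.range N, qe n q (s : ℤ) * hz n q (t - s) =
      ∑ s ∈ Finset.range (max N (n+1)), qe n q (s : ℤ) * hz n q (t - s) := by
    apply sum_range_ext _ (le_max_left _ _)
    intro s hs
    rcases h with h | h
    · rw [qe_out n q (by push_cast; omega) (by push_cast; omega), zero_mul]
    · rw [hz_neg n q (by omega : t - (s:ℤ) < 0), mul_zero]
  rw [e1, e2]

/-- Cz with an enlarged summation range -/
lemma Cz_ext (u : ℤ) (M : ℕ) (hM : u < (M:ℤ) + 1) :
    Cz n q u = ∑ a ∈ Finset.range (M + 1), hz n q (a : ℤ) * hz n q (u - a) := by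
  unfold Cz
  rcases le_or_gt (u.toNat + 1) (M + 1) with hle | hlt
  · apply sum_range_ext _ hle
    intro s hs
    rw [hz_neg n q (by omega : u - (s:ℤ) < 0), mul_zero]
  · symm
    apply sum_range_ext _ hlt.le
    intro s hs
    rw [hz_neg n q (by omega : u - (s:ℤ) < 0), mul_zero]

lemma E1 (t : ℤ) : ∑ s ∈ Finset.range (n + 1), qe n q (s : ℤ) * Cz n q (t - s) = hz n q t := by
  rcases lt_or_ge t 0 with ht | ht
  · rw [hz_neg n q ht]
    apply Finset.sum_eq_zero
    intro s _
    rw [Cz_neg n q (by omega : t - (s:ℤ) < 0), mul_zero]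
  · have hM : ∀ s ∈ Finset.range (n+1), qe n q (s:ℤ) * Cz n q (t - s) =
        qe n q (s:ℤ) * ∑ a ∈ Finset.range (t.toNat + 1), hz n q (a:ℤ) * hz n q (t - s - a) := by
      intro s _
      rw [Cz_ext n q (t - s) t.toNat (by omega)]
    rw [Finset.sum_congr rfl hM]
    simp_rw [Finset.mul_sum]
    rw [Finset.sum_comm]
    have inner : ∀ a ∈ Finset.range (t.toNat + 1),
        ∑ s ∈ Finset.range (n+1), qe n q (s:ℤ) * (hz n q (a:ℤ) * hz n q (t - s - a)) =
        hz n q (a:ℤ) * (if t - a = 0 then 1 else 0) := by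
      intro a _
      rw [← master n q (t - a), Finset.mul_sum]
      apply Finset.sum_congr rfl
      intro s _
      have : t - s - a = t - a - s := by ring
      rw [this]; ring
    rw [Finset.sum_congr rfl inner]
    rw [Finset.sum_eq_single_of_mem t.toNat (Finset.self_mem_range_succ _)
      (fun a _ ha => by rw [if_neg (by omega), mul_zero])]
    rw [if_pos (by omega), mul_one]
    unfold hz
    rw [if_pos ht, if_pos (by omega)]
    congr 1

end P3

namespace P3
variable (n : ℕ) (q : Fin n → ℝ)

lemma hz_rec (t : ℤ) (ht : t ≠ 0) :
    hz n q t = -∑ s ∈ Finset.range n, qe n q ((s:ℤ)+1) * hz n q (t - s - 1) := by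
  have h := master n q t
  rw [if_neg ht, Finset.sum_range_succ'] at h
  have h0 : qe n q ((0:ℕ):ℤ) * hz n q (t - (0:ℕ)) = hz n q t := by
    simp [qe_zero]
  rw [h0] at h
  have : ∀ s ∈ Finset.range n, qe n q (((s+1:ℕ)):ℤ) * hz n q (t - ((s+1:ℕ):ℤ)) =
      qe n q ((s:ℤ)+1) * hz n q (t - s - 1) := by
    intro s _
    have e1 : ((s+1:ℕ):ℤ) = (s:ℤ)+1 := by push_cast; ring
    have e2 : t - ((s:ℤ)+1) = t - s - 1 := by ring
    rw [e1, e2]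
  rw [Finset.sum_congr rfl this] at h
  linarith

lemma Cz_rec (t : ℤ) :
    Cz n q t = hz n q t - ∑ s ∈ Finset.range n, qe n q ((s:ℤ)+1) * Cz n q (t - s - 1) := by
  have h := E1 n q t
  rw [Finset.sum_range_succ'] at h
  have h0 : qe n q ((0:ℕ):ℤ) * Cz n q (t - (0:ℕ)) = Cz n q t := by
    simp [qe_zero]
  rw [h0] at h
  have : ∀ s ∈ Finset.range n, qe n q (((s+1:ℕ)):ℤ) * Cz n q (t - ((s+1:ℕ):ℤ)) =
      qe n q ((s:ℤ)+1) * Cz n q (t - s - 1) := by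
    intro s _
    have e1 : ((s+1:ℕ):ℤ) = (s:ℤ)+1 := by push_cast; ring
    have e2 : t - ((s:ℤ)+1) = t - s - 1 := by ring
    rw [e1, e2]
  rw [Finset.sum_congr rfl this] at h
  linarith

lemma E2 (t : ℤ) :
    (t:ℝ) * hz n q t = -∑ d ∈ Finset.range (n+1), (d:ℝ) * qe n q (d:ℤ) * Cz n q (t - d) := by
  obtain ⟨e, he⟩ : ∃ e : ℕ, t ≤ (e:ℤ) := ⟨t.toNat, by omega⟩
  induction e generalizing t with
  | zero =>
    rcases lt_or_ge t 0 with h | h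
    · rw [hz_neg n q h,
        Finset.sum_eq_zero (fun d _ => by rw [Cz_neg n q (by omega : t - (d:ℤ) < 0), mul_zero])]
      simp
    · have ht0 : t = 0 := by omega
      subst ht0
      rw [Finset.sum_eq_zero]
      · simp
      · intro d hd
        rcases Nat.eq_zero_or_pos d with rfl | hd1
        · simp
        · rw [Cz_neg n q (by omega : (0:ℤ) - (d:ℤ) < 0), mul_zero]
  | succ e ih =>
    rcases le_or_gt t (e:ℤ) with h | h
    · exact ih t h
    · have h0 : t ≠ 0 := by omega
      rw [hz_rec n q t h0]
      have fact0 : (t:ℝ) * -∑ s ∈ Finset.range n, qe n q ((s:ℤ)+1) * hz n q (t - s - 1)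
          = -(∑ s ∈ Finset.range n, qe n q ((s:ℤ)+1) * (((t - (s:ℤ) - 1:ℤ):ℝ) * hz n q (t - s - 1)))
            - ∑ s ∈ Finset.range n, ((s:ℝ)+1) * (qe n q ((s:ℤ)+1) * hz n q (t - s - 1)) := by
        rw [← neg_add', ← Finset.sum_add_distrib, mul_neg, neg_inj, Finset.mul_sum]
        apply Finset.sum_congr rfl
        intro s _
        push_cast
        ring
      rw [fact0]
      have factA : ∑ s ∈ Finset.range n, qe n q ((s:ℤ)+1) * (((t - (s:ℤ) - 1:ℤ):ℝ) * hz n q (t - s - 1))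
          = -∑ d ∈ Finset.range (n+1), (d:ℝ) * qe n q (d:ℤ) *
              (hz n q (t - d) - Cz n q (t - d)) := by
        have hIH : ∀ s ∈ Finset.range n,
            qe n q ((s:ℤ)+1) * (((t - (s:ℤ) - 1:ℤ):ℝ) * hz n q (t - s - 1)) =
            ∑ d ∈ Finset.range (n+1),
              -((d:ℝ) * qe n q (d:ℤ) * (qe n q ((s:ℤ)+1) * Cz n q ((t - d) - s - 1))) := by
          intro s _
          rw [ih (t - s - 1) (by omega)]
          rw [mul_neg, Finset.mul_sum, ← Finset.sum_neg_distrib]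
          apply Finset.sum_congr rfl
          intro d _
          have harg : t - (s:ℤ) - 1 - d = t - d - s - 1 := by ring
          rw [harg]
          ring
        rw [Finset.sum_congr rfl hIH, Finset.sum_comm]
        rw [← Finset.sum_neg_distrib]
        apply Finset.sum_congr rfl
        intro d _
        rw [Finset.sum_neg_distrib, ← Finset.mul_sum, neg_inj]
        congr 1
        have := Cz_rec n q (t - d)
        linarith
      have factB : ∑ s ∈ Finset.range n, ((s:ℝ)+1) * (qe n q ((s:ℤ)+1) * hz n q (t - s - 1))
          = ∑ d ∈ Finset.range (n+1), (d:ℝ) * qe n q (d:ℤ) * hz n q (t - d) := by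
        rw [Finset.sum_range_succ']
        have h00 : ((0:ℕ):ℝ) * qe n q ((0:ℕ):ℤ) * hz n q (t - (0:ℕ)) = 0 := by simp
        rw [h00, add_zero]
        apply Finset.sum_congr rfl
        intro s _
        have harg : t - ((s+1:ℕ):ℤ) = t - s - 1 := by push_cast; ring
        rw [harg]
        push_cast
        ring
      rw [factA, factB, neg_neg, ← Finset.sum_sub_distrib, ← Finset.sum_neg_distrib]
      apply Finset.sum_congr rfl
      intro d _
      ring

lemma Efinal (t : ℤ) :
    ∑ d ∈ Finset.range (n+1), ((n:ℝ) - d) * (qe n q (d:ℤ) * Cz n q (t - d))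
      = ((n:ℝ) + t) * hz n q t := by
  have h1 := E1 n q t
  have h2 := E2 n q t
  have : ∑ d ∈ Finset.range (n+1), ((n:ℝ) - d) * (qe n q (d:ℤ) * Cz n q (t - d))
      = (n:ℝ) * ∑ d ∈ Finset.range (n+1), qe n q (d:ℤ) * Cz n q (t - d)
        - ∑ d ∈ Finset.range (n+1), (d:ℝ) * qe n q (d:ℤ) * Cz n q (t - d) := by
    rw [Finset.mul_sum, ← Finset.sum_sub_distrib]
    apply Finset.sum_congr rfl
    intro d _
    ring
  rw [this, h1]
  nlinarith [h2]

end P3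

namespace P3

/-- the closed formula for `V^{(α)}_k`, `α ≥ 0` -/
def Wf (n : ℕ) (q : Fin n → ℝ) (α k : ℤ) : ℝ :=
  -∑ d ∈ Finset.range k.toNat, qe n q (d : ℤ) * hz n q (α + k - n - d)

variable (n : ℕ) (q : Fin n → ℝ)

lemma Wf_delta (α k : ℤ) (hα : 0 ≤ α) (hα2 : α ≤ (n:ℤ) - 1) (hk : 1 ≤ k) :
    Wf n q α k = if k = (n:ℤ) - α then -1 else 0 := by
  unfold Wf
  rcases lt_or_ge (α + k - n) 0 with hneg | hpos
  · rw [Finset.sum_eq_zero (fun d _ => by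
      rw [hz_neg n q (by omega : α + k - n - (d:ℤ) < 0), mul_zero])]
    rw [if_neg (by omega), neg_zero]
  · rw [master_trunc n q (α + k - n) k.toNat (Or.inr (by omega))]
    by_cases h : α + k - n = 0
    · rw [if_pos h, if_pos (by omega)]
    · rw [if_neg h, if_neg (by omega), neg_zero]

lemma Wf_step (α k : ℤ) (hα : 0 ≤ α) (hk : 1 ≤ k) (hk2 : k ≤ (n:ℤ)) :
    Wf n q (α+1) k = Wf n q α (k+1) - qe n q k * Wf n q α 1 := by
  have h1 : Wf n q α 1 = -hz n q (α + 1 - n) := by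
    unfold Wf
    rw [show (1:ℤ).toNat = 1 from rfl, Finset.sum_range_one,
      show ((0:ℕ):ℤ) = 0 from rfl, qe_zero,
      show α + 1 - (n:ℤ) - (0:ℤ) = α + 1 - n from by ring, one_mul]
  have hkk : (k+1).toNat = k.toNat + 1 := by omega
  rw [h1]
  unfold Wf
  rw [hkk, Finset.sum_range_succ]
  have harg : α + (k+1) - n - (k.toNat:ℤ) = α + 1 - n := by omega
  have hqk : ((k.toNat:ℕ):ℤ) = k := by omega
  rw [harg, hqk]
  have : ∀ d ∈ Finset.range k.toNat,
      qe n q (d:ℤ) * hz n q (α + (k+1) - n - d) = qe n q (d:ℤ) * hz n q ((α+1) + k - n - d) := by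
    intro d _
    congr 1
    congr 1
    omega
  rw [Finset.sum_congr rfl this]
  ring

lemma Wf_top (α : ℤ) (hα : 0 ≤ α) :
    Wf n q α ((n:ℤ)+1) = 0 := by
  unfold Wf
  have h : ((n:ℤ)+1).toNat = n + 1 := by omega
  rw [h]
  have harg : ∀ d : ℕ, α + ((n:ℤ)+1) - n - d = (α + 1) - d := by intro d; ring
  simp_rw [harg]
  rw [master_trunc n q (α+1) (n+1) (Or.inl (by omega))]
  rw [if_neg (by omega), neg_zero]

lemma VupWf (hn : 1 ≤ n) (d : ℕ) : ∀ k : ℤ, 1 ≤ k → k ≤ (n:ℤ)+1 →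
    Vup n q d k = Wf n q ((n:ℤ) - 1 + d) k := by
  induction d with
  | zero =>
    intro k hk1 hk2
    rw [show ((n:ℤ) - 1 + (0:ℕ)) = (n:ℤ)-1 by push_cast; ring]
    rw [Wf_delta n q ((n:ℤ)-1) k (by omega) (by omega) hk1]
    unfold Vup
    congr 1
    simp only [eq_iff_iff]
    omega
  | succ d ih =>
    intro k hk1 hk2
    rcases eq_or_lt_of_le hk2 with heq | hlt
    · -- k = n+1
      rw [heq]
      have h1 : Vup n q (d+1) ((n:ℤ)+1) = 0 := by
        simp only [Vup]
        rw [if_neg (by omega)]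
      rw [h1]
      rw [show ((n:ℤ) - 1 + ((d+1:ℕ):ℤ)) = ((n:ℤ) - 1 + d) + 1 by push_cast; ring]
      rw [← Wf_top n q ((n:ℤ) - 1 + d + 1) (by omega)]
    · have hk2' : k ≤ (n:ℤ) := by omega
      have h1 : Vup n q (d+1) k = Vup n q d (k+1) - qe n q k * Vup n q d 1 := by
        simp only [Vup]
        rw [if_pos ⟨hk1, hk2'⟩]
      rw [h1, ih (k+1) (by omega) (by omega), ih 1 (by omega) (by omega)]
      rw [show ((n:ℤ) - 1 + ((d+1:ℕ):ℤ)) = ((n:ℤ) - 1 + d) + 1 by push_cast; ring]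
      rw [Wf_step n q ((n:ℤ)-1+d) k (by omega) hk1 hk2']

lemma Vpot_eq_Wf (hn : 1 ≤ n) (α k : ℤ) (hα : 0 ≤ α) (hk1 : 1 ≤ k) (hk2 : k ≤ (n:ℤ)+1) :
    Vpot n q α k = Wf n q α k := by
  unfold Vpot
  rw [if_pos hα]
  rcases le_or_gt α ((n:ℤ)-1) with h | h
  · rw [if_pos h, Wf_delta n q α k hα h hk1]
  · rw [if_neg (by omega)]
    have := VupWf n q hn (α - ((n:ℤ)-1)).toNat k hk1 hk2
    rw [this]
    congr 1
    omega

end P3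

namespace P3

def Qc (n : ℕ) (s : ℕ) : (Fin n → ℝ) →L[ℝ] ℝ :=
  if h : 1 ≤ s ∧ s ≤ n then
    ContinuousLinearMap.proj (R := ℝ) (φ := fun _ : Fin n => ℝ) ⟨s - 1, by omega⟩
  else 0

def Dh (n : ℕ) (x : Fin n → ℝ) (e : ℕ) : (Fin n → ℝ) →L[ℝ] ℝ :=
  ∑ j : Fin n, (-(Cz n x ((e:ℤ) - (j:ℤ) - 1))) • (ContinuousLinearMap.proj j)

def Dz (n : ℕ) (x : Fin n → ℝ) (t : ℤ) : (Fin n → ℝ) →L[ℝ] ℝ :=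
  if 0 ≤ t then Dh n x t.toNat else 0

variable (n : ℕ) (q : Fin n → ℝ)

lemma Dh_apply (x : Fin n → ℝ) (e : ℕ) (v : Fin n → ℝ) :
    Dh n x e v = ∑ j : Fin n, -(Cz n x ((e:ℤ) - (j:ℤ) - 1)) * v j := by
  simp [Dh, ContinuousLinearMap.sum_apply, ContinuousLinearMap.proj_apply, smul_eq_mul]

lemma Qc_apply (s : ℕ) (v : Fin n → ℝ) :
    Qc n s v = ∑ j : Fin n, (if s = (j:ℕ) + 1 then v j else 0) := by
  unfold Qc
  split_ifs with h
  · rw [ContinuousLinearMap.proj_apply]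
    rw [Finset.sum_eq_single (⟨s - 1, by omega⟩ : Fin n)]
    · rw [if_pos (by simp; omega)]
    · intro j _ hj
      rw [if_neg (fun hc => hj (by apply Fin.ext; simp; omega))]
    · intro hj
      exact absurd (Finset.mem_univ _) hj
  · rw [ContinuousLinearMap.zero_apply]
    symm
    apply Finset.sum_eq_zero
    intro j _
    rw [if_neg (by omega)]

lemma hasFDerivAt_qe (s : ℕ) (x : Fin n → ℝ) :
    HasFDerivAt (fun y : Fin n → ℝ => qe n y (s:ℤ)) (Qc n s) x := by
  unfold Qc
  split_ifs with h
  · have hfun : (fun y : Fin n → ℝ => qe n y (s:ℤ)) = fun y => y ⟨s - 1, by omega⟩ := by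
      funext y
      unfold qe
      rw [dif_pos (by constructor <;> [exact_mod_cast h.1; exact_mod_cast h.2])]
      congr 1
      apply Fin.ext
      simp only []
      omega
    rw [hfun]
    exact (ContinuousLinearMap.proj (R := ℝ) (φ := fun _ : Fin n => ℝ)
      (⟨s - 1, by omega⟩ : Fin n)).hasFDerivAt
  · have hfun : (fun y : Fin n → ℝ => qe n y (s:ℤ)) =
        fun _ => (if (s:ℤ) = 0 then (1:ℝ) else 0) := by
      funext y
      unfold qe
      rw [dif_neg (by push_cast; omega)]
    rw [hfun]
    exact hasFDerivAt_const _ _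

lemma hasFDerivAt_qe' (s : ℕ) (x : Fin n → ℝ) :
    HasFDerivAt (fun y : Fin n → ℝ => qe n y ((s:ℤ)+1)) (Qc n (s+1)) x := by
  have h := hasFDerivAt_qe n (s+1) x
  simp only [Nat.cast_add, Nat.cast_one] at h
  exact h

lemma scalar_step (e : ℕ) (j : ℕ) :
    ∑ s ∈ Finset.range (e+1), qe n q ((s:ℤ)+1) * Cz n q ((e:ℤ) - s - j - 1)
      - (if j ≤ e then hz n q ((e:ℤ) - j) else 0) = -Cz n q ((e:ℤ) - j) := by
  rcases lt_or_ge e j with hlt | hle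
  · rw [if_neg (by omega), Cz_neg n q (by omega : (e:ℤ) - j < 0)]
    rw [Finset.sum_eq_zero (fun s _ => by
      rw [Cz_neg n q (by omega : (e:ℤ) - s - j - 1 < 0), mul_zero])]
    ring
  · rw [if_pos hle]
    have hC := Cz_rec n q ((e:ℤ) - j)
    have hsums : ∑ s ∈ Finset.range (e+1), qe n q ((s:ℤ)+1) * Cz n q ((e:ℤ) - s - j - 1)
        = ∑ s ∈ Finset.range n, qe n q ((s:ℤ)+1) * Cz n q (((e:ℤ) - j) - s - 1) := by
      have harg : ∀ s : ℕ, (e:ℤ) - s - j - 1 = ((e:ℤ) - j) - s - 1 := by intro s; ring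
      simp_rw [harg]
      have e1 : ∑ s ∈ Finset.range (e+1), qe n q ((s:ℤ)+1) * Cz n q (((e:ℤ) - j) - s - 1)
          = ∑ s ∈ Finset.range (max (e+1) n), qe n q ((s:ℤ)+1) * Cz n q (((e:ℤ) - j) - s - 1) := by
        apply sum_range_ext _ (le_max_left _ _)
        intro s hs
        rw [Cz_neg n q (by omega : ((e:ℤ) - j) - s - 1 < 0), mul_zero]
      have e2 : ∑ s ∈ Finset.range n, qe n q ((s:ℤ)+1) * Cz n q (((e:ℤ) - j) - s - 1)
          = ∑ s ∈ Finset.range (max (e+1) n), qe n q ((s:ℤ)+1) * Cz n q (((e:ℤ) - j) - s - 1) := by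
        apply sum_range_ext _ (le_max_right _ _)
        intro s hs
        rw [qe_out n q (by push_cast; omega) (by push_cast; omega), zero_mul]
      rw [e1, e2]
    rw [hsums]
    linarith

lemma hasFDerivAt_hh (e : ℕ) (x : Fin n → ℝ) :
    HasFDerivAt (fun y => hh n y e) (Dh n x e) x := by
  induction e using Nat.strong_induction_on with
  | _ e ih =>
    cases e with
    | zero =>
      have hD : Dh n x 0 = 0 := by
        unfold Dh
        apply Finset.sum_eq_zero
        intro j _
        rw [Cz_neg n x (by omega : ((0:ℕ):ℤ) - (j:ℤ) - 1 < 0), neg_zero, zero_smul]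
      rw [hD, show (fun y => hh n y 0) = (fun _ : Fin n → ℝ => (1:ℝ)) from
        funext (fun y => by simp [hh])]
      exact hasFDerivAt_const _ _
    | succ e =>
      have heq : (fun y => hh n y (e+1)) =
          fun y => -∑ s ∈ Finset.range (e+1), qe n y ((s:ℤ)+1) * hh n y (e - s) := by
        funext y
        rw [hh]
      rw [heq]
      have hterm : ∀ s ∈ Finset.range (e+1),
          HasFDerivAt (fun y => qe n y ((s:ℤ)+1) * hh n y (e-s))
            (qe n x ((s:ℤ)+1) • Dh n x (e-s) + hh n x (e-s) • Qc n (s+1)) x :=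
        fun s hs => (hasFDerivAt_qe' n s x).mul (ih (e-s) (by omega))
      have hsum := (HasFDerivAt.fun_sum hterm).neg
      have hD : Dh n x (e+1) =
          -∑ s ∈ Finset.range (e+1),
            (qe n x ((s:ℤ)+1) • Dh n x (e-s) + hh n x (e-s) • Qc n (s+1)) := by
        apply ContinuousLinearMap.ext
        intro v
        rw [ContinuousLinearMap.neg_apply, ContinuousLinearMap.sum_apply]
        have expand : ∀ s ∈ Finset.range (e+1),
            (qe n x ((s:ℤ)+1) • Dh n x (e-s) + hh n x (e-s) • Qc n (s+1)) v =
            ∑ j : Fin n,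
              (qe n x ((s:ℤ)+1) * -(Cz n x ((e:ℤ) - s - (j:ℤ) - 1))
                + (if s = (j:ℕ) then hh n x (e-s) else 0)) * v j := by
          intro s hs
          rw [ContinuousLinearMap.add_apply, ContinuousLinearMap.smul_apply,
            ContinuousLinearMap.smul_apply, smul_eq_mul, smul_eq_mul,
            Dh_apply, Qc_apply, Finset.mul_sum, Finset.mul_sum, ← Finset.sum_add_distrib]
          apply Finset.sum_congr rfl
          intro j _
          have hc : (((e - s:ℕ)):ℤ) - (j:ℤ) - 1 = (e:ℤ) - s - j - 1 := by
            have hs' : s ≤ e := by simpa [Nat.lt_succ_iff] using hs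
            omega
          rw [hc]
          have hif : s + 1 = (j:ℕ) + 1 ↔ s = (j:ℕ) := by omega
          by_cases hsj : s = (j:ℕ)
          · rw [if_pos (by omega), if_pos hsj]
            ring
          · rw [if_neg (by omega), if_neg hsj]
            ring
        rw [Finset.sum_congr rfl expand, Finset.sum_comm, Dh_apply, ← Finset.sum_neg_distrib]
        apply Finset.sum_congr rfl
        intro j _
        rw [← Finset.sum_mul, ← neg_mul]
        congr 1
        have hite : ∑ s ∈ Finset.range (e+1), (if s = (j:ℕ) then hh n x (e-s) else 0)
            = if (j:ℕ) ≤ e then hz n x ((e:ℤ) - j) else 0 := by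
          rw [Finset.sum_ite_eq' (Finset.range (e+1)) (j:ℕ) (fun s => hh n x (e-s))]
          by_cases hj : (j:ℕ) ≤ e
          · rw [if_pos (by simpa [Nat.lt_succ_iff] using hj), if_pos hj]
            rw [hz]
            rw [if_pos (by omega)]
            congr 1
            omega
          · rw [if_neg (by simpa [Nat.lt_succ_iff] using hj), if_neg hj]
        have hsplit : ∑ s ∈ Finset.range (e+1),
            (qe n x ((s:ℤ)+1) * -(Cz n x ((e:ℤ) - s - (j:ℤ) - 1))
              + (if s = (j:ℕ) then hh n x (e-s) else 0))
            = -(∑ s ∈ Finset.range (e+1), qe n x ((s:ℤ)+1) * Cz n x ((e:ℤ) - s - (j:ℤ) - 1))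
              + (if (j:ℕ) ≤ e then hz n x ((e:ℤ) - j) else 0) := by
          rw [Finset.sum_add_distrib, hite, ← Finset.sum_neg_distrib]
          congr 1
          apply Finset.sum_congr rfl
          intro s _
          ring
        rw [hsplit]
        have := scalar_step n x e (j:ℕ)
        have harg : ((e:ℤ)+1) - ((j:ℕ):ℤ) - 1 = (e:ℤ) - ((j:ℕ):ℤ) := by ring
        push_cast
        push_cast at this
        rw [harg]
        linarith
      rw [hD]
      exact hsum

end P3

namespace P3

variable (n : ℕ) (q : Fin n → ℝ)

lemma hasFDerivAt_hz (t : ℤ) (x : Fin n → ℝ) :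
    HasFDerivAt (fun y => hz n y t) (Dz n x t) x := by
  unfold hz Dz
  split_ifs with h
  · exact hasFDerivAt_hh n t.toNat x
  · exact hasFDerivAt_const _ _

lemma Dh_single (x : Fin n → ℝ) (e : ℕ) (j : Fin n) :
    Dh n x e (Pi.single j 1) = -(Cz n x ((e:ℤ) - (j:ℤ) - 1)) := by
  rw [Dh_apply]
  rw [Finset.sum_eq_single j]
  · rw [Pi.single_eq_same, mul_one]
  · intro j' _ hj'
    rw [Pi.single_eq_of_ne hj', mul_zero]
  · intro hj
    exact absurd (Finset.mem_univ _) hj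

lemma Dz_single (x : Fin n → ℝ) (t : ℤ) (j : Fin n) :
    Dz n x t (Pi.single j 1) = -(Cz n x (t - (j:ℤ) - 1)) := by
  unfold Dz
  split_ifs with h
  · rw [Dh_single]
    congr 2
    omega
  · rw [ContinuousLinearMap.zero_apply, Cz_neg n x (by omega : t - (j:ℤ) - 1 < 0), neg_zero]

lemma Qc_single (s : ℕ) (j : Fin n) :
    Qc n s (Pi.single j 1) = if s = (j:ℕ) + 1 then 1 else 0 := by
  rw [Qc_apply]
  rw [Finset.sum_eq_single j]
  · rw [Pi.single_eq_same]
  · intro j' _ hj'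
    rw [Pi.single_eq_of_ne hj']
    split_ifs <;> rfl
  · intro hj
    exact absurd (Finset.mem_univ _) hj

lemma Ppot_expand (hn : 1 ≤ n) (γ r : ℤ) (hγ : 0 ≤ γ) (hr1 : 1 ≤ r)
    (k : ℤ) (hk1 : 1 ≤ k) (hk2 : k ≤ (n:ℤ)) (y : Fin n → ℝ) :
    Ppot n y γ r k = ∑ s ∈ Finset.range r.toNat, ∑ d ∈ Finset.range k.toNat,
      qe n y (s:ℤ) * (qe n y (d:ℤ) * hz n y (γ + r - 1 - s + k - n - d)) := by
  unfold Ppot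
  rw [← Finset.sum_neg_distrib]
  apply Finset.sum_congr rfl
  intro s hs
  have hs' : (s:ℤ) ≤ r - 1 := by
    have := Finset.mem_range.1 hs
    omega
  rw [Vpot_eq_Wf n y hn (r + γ - s - 1) k (by omega) hk1 (by omega)]
  unfold Wf
  rw [mul_neg, neg_neg, Finset.mul_sum]
  apply Finset.sum_congr rfl
  intro d _
  have harg : r + γ - s - 1 + k - n - d = γ + r - 1 - s + k - n - d := by ring
  rw [harg]

lemma hasFDerivAt_Ppot (hn : 1 ≤ n) (γ r : ℤ) (hγ : 0 ≤ γ) (hr1 : 1 ≤ r)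
    (k : ℤ) (hk1 : 1 ≤ k) (hk2 : k ≤ (n:ℤ)) (x : Fin n → ℝ) :
    HasFDerivAt (fun y => Ppot n y γ r k)
      (∑ s ∈ Finset.range r.toNat, ∑ d ∈ Finset.range k.toNat,
        (qe n x (s:ℤ) • (qe n x (d:ℤ) • Dz n x (γ + r - 1 - s + k - n - d)
            + hz n x (γ + r - 1 - s + k - n - d) • Qc n d)
          + (qe n x (d:ℤ) * hz n x (γ + r - 1 - s + k - n - d)) • Qc n s)) x := by
  have hfun : (fun y => Ppot n y γ r k) = fun y =>
      ∑ s ∈ Finset.range r.toNat, ∑ d ∈ Finset.range k.toNat,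
        qe n y (s:ℤ) * (qe n y (d:ℤ) * hz n y (γ + r - 1 - s + k - n - d)) :=
    funext (fun y => Ppot_expand n hn γ r hγ hr1 k hk1 hk2 y)
  rw [hfun]
  exact HasFDerivAt.fun_sum (fun s _ => HasFDerivAt.fun_sum (fun d _ =>
    (hasFDerivAt_qe n s x).mul ((hasFDerivAt_qe n d x).mul
      (hasFDerivAt_hz n (γ + r - 1 - s + k - n - d) x))))

lemma pd_Ppot (hn : 1 ≤ n) (γ r : ℤ) (hγ : 0 ≤ γ) (hr1 : 1 ≤ r) (j : Fin n) :
    pd n j (fun y => Ppot n y γ r ((j:ℤ)+1)) q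
      = (if (j:ℕ)+1 < r.toNat then
            ∑ d ∈ Finset.range ((j:ℕ)+1), qe n q (d:ℤ) * hz n q (γ + r - 1 - n - d)
          else 0)
        - ∑ s ∈ Finset.range r.toNat, ∑ d ∈ Finset.range ((j:ℕ)+1),
            qe n q (s:ℤ) * qe n q (d:ℤ) * Cz n q (γ + r - 1 - n - s - d) := by
  have hk1 : (1:ℤ) ≤ (j:ℤ)+1 := by omega
  have hk2 : (j:ℤ)+1 ≤ (n:ℤ) := by
    have := j.isLt
    omega
  have hD := hasFDerivAt_Ppot n hn γ r hγ hr1 ((j:ℤ)+1) hk1 hk2 q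
  unfold pd
  rw [hD.fderiv]
  rw [ContinuousLinearMap.sum_apply]
  have hto : ((j:ℤ)+1).toNat = (j:ℕ)+1 := by omega
  rw [hto] at *
  have hterm : ∀ s ∈ Finset.range r.toNat,
      (∑ d ∈ Finset.range ((j:ℕ)+1),
        (qe n q (s:ℤ) • (qe n q (d:ℤ) • Dz n q (γ + r - 1 - s + ((j:ℤ)+1) - n - d)
            + hz n q (γ + r - 1 - s + ((j:ℤ)+1) - n - d) • Qc n d)
          + (qe n q (d:ℤ) * hz n q (γ + r - 1 - s + ((j:ℤ)+1) - n - d)) • Qc n s))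
        (Pi.single j 1)
      = ∑ d ∈ Finset.range ((j:ℕ)+1),
          ((if s = (j:ℕ)+1 then qe n q (d:ℤ) * hz n q (γ + r - 1 - n - d) else 0)
            - qe n q (s:ℤ) * qe n q (d:ℤ) * Cz n q (γ + r - 1 - n - s - d)) := by
    intro s hs
    rw [ContinuousLinearMap.sum_apply]
    apply Finset.sum_congr rfl
    intro d hd
    rw [ContinuousLinearMap.add_apply, ContinuousLinearMap.smul_apply,
      ContinuousLinearMap.smul_apply, ContinuousLinearMap.add_apply,
      ContinuousLinearMap.smul_apply, ContinuousLinearMap.smul_apply,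
      Dz_single, Qc_single, Qc_single]
    have hdj : ¬ (d = (j:ℕ) + 1) := by
      have := Finset.mem_range.1 hd
      omega
    rw [if_neg hdj]
    have harg1 : γ + r - 1 - s + ((j:ℤ)+1) - n - d - (j:ℤ) - 1 = γ + r - 1 - n - s - d := by
      ring
    rw [harg1]
    by_cases hsj : s = (j:ℕ)+1
    · rw [if_pos hsj, if_pos hsj]
      have harg2 : γ + r - 1 - (s:ℤ) + ((j:ℤ)+1) - n - d = γ + r - 1 - n - d := by
        rw [hsj]
        push_cast
        ring
      rw [harg2]
      simp only [smul_eq_mul]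
      ring
    · rw [if_neg hsj, if_neg hsj]
      simp only [smul_eq_mul]
      ring
  rw [Finset.sum_congr rfl hterm]
  have hin : ∀ s ∈ Finset.range r.toNat,
      ∑ d ∈ Finset.range ((j:ℕ)+1),
        ((if s = (j:ℕ)+1 then qe n q (d:ℤ) * hz n q (γ + r - 1 - n - d) else 0)
          - qe n q (s:ℤ) * qe n q (d:ℤ) * Cz n q (γ + r - 1 - n - s - d))
      = (∑ d ∈ Finset.range ((j:ℕ)+1),
          (if s = (j:ℕ)+1 then qe n q (d:ℤ) * hz n q (γ + r - 1 - n - d) else 0))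
        - ∑ d ∈ Finset.range ((j:ℕ)+1),
            qe n q (s:ℤ) * qe n q (d:ℤ) * Cz n q (γ + r - 1 - n - s - d) :=
    fun s _ => Finset.sum_sub_distrib _ _
  rw [Finset.sum_congr rfl hin, Finset.sum_sub_distrib]
  congr 1
  have : ∀ s ∈ Finset.range r.toNat,
      (∑ d ∈ Finset.range ((j:ℕ)+1),
        (if s = (j:ℕ)+1 then qe n q (d:ℤ) * hz n q (γ + r - 1 - n - d) else 0))
      = (if s = (j:ℕ)+1 then
          ∑ d ∈ Finset.range ((j:ℕ)+1), qe n q (d:ℤ) * hz n q (γ + r - 1 - n - d) else 0) := by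
    intro s _
    split_ifs <;> simp
  rw [Finset.sum_congr rfl this]
  rw [Finset.sum_ite_eq' (Finset.range r.toNat) ((j:ℕ)+1)]
  simp only [Finset.mem_range]

end P3

namespace P3
variable (n : ℕ) (q : Fin n → ℝ)

lemma sumTri (f : ℕ → ℝ) (N : ℕ) :
    ∑ j ∈ Finset.range N, ∑ d ∈ Finset.range (j+1), f d
      = ∑ d ∈ Finset.range N, ((N:ℝ) - d) * f d := by
  induction N with
  | zero => simp
  | succ N ih =>
    rw [Finset.sum_range_succ, ih, Finset.sum_range_succ (f := fun d => (((N+1:ℕ):ℝ) - d) * f d),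
      Finset.sum_range_succ (f := f)]
    push_cast
    rw [show ((N:ℝ) + 1 - (N:ℝ)) * f N = f N by ring, ← add_assoc, ← Finset.sum_add_distrib]
    congr 1
    apply Finset.sum_congr rfl
    intro d _
    ring

lemma sum_guard (g : ℕ → ℝ) (R N : ℕ) (h : R ≤ N + 1) :
    ∑ j ∈ Finset.range N, (if j + 1 < R then g j else 0) = ∑ j ∈ Finset.range (R-1), g j := by
  rw [← Finset.sum_subset (Finset.range_subset_range.2 (by omega : R - 1 ≤ N))
    (fun x _ hx => if_neg (by simp only [Finset.mem_range] at hx; omega))]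
  apply Finset.sum_congr rfl
  intro j hj
  rw [if_pos (by simp only [Finset.mem_range] at hj; omega)]

lemma div_total (hn : 1 ≤ n) (γ r : ℤ) (hγ : 0 ≤ γ) (hr1 : 1 ≤ r) (hrn : r ≤ (n:ℤ)) :
    ∑ j : Fin n, pd n j (fun y => Ppot n y γ r ((j:ℤ)+1)) q
      = -(γ:ℝ) * ∑ s ∈ Finset.range r.toNat, qe n q (s:ℤ) * hz n q (γ + r - 1 - n - s) := by
  have h1 : ∑ j : Fin n, pd n j (fun y => Ppot n y γ r ((j:ℤ)+1)) q
      = ∑ j : Fin n, ((fun jj : ℕ =>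
          (if jj+1 < r.toNat then
              ∑ d ∈ Finset.range (jj+1), qe n q (d:ℤ) * hz n q (γ + r - 1 - n - d)
            else 0)
          - ∑ s ∈ Finset.range r.toNat, ∑ d ∈ Finset.range (jj+1),
              qe n q (s:ℤ) * qe n q (d:ℤ) * Cz n q (γ + r - 1 - n - s - d)) : ℕ → ℝ) (j:ℕ) :=
    Finset.sum_congr rfl (fun j _ => pd_Ppot n q hn γ r hγ hr1 j)
  rw [h1, Fin.sum_univ_eq_sum_range (fun jj : ℕ =>
      (if jj+1 < r.toNat then
          ∑ d ∈ Finset.range (jj+1), qe n q (d:ℤ) * hz n q (γ + r - 1 - n - d)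
        else 0)
      - ∑ s ∈ Finset.range r.toNat, ∑ d ∈ Finset.range (jj+1),
          qe n q (s:ℤ) * qe n q (d:ℤ) * Cz n q (γ + r - 1 - n - s - d)) n,
    Finset.sum_sub_distrib]
  have hR1 : 1 ≤ r.toNat := by omega
  have hRn : r.toNat ≤ n := by omega
  -- Piece 2 (the guarded part)
  have hP2 : ∑ j ∈ Finset.range n,
      (if j+1 < r.toNat then
          ∑ d ∈ Finset.range (j+1), qe n q (d:ℤ) * hz n q (γ + r - 1 - n - d)
        else 0)
      = ∑ d ∈ Finset.range r.toNat,
          ((r:ℝ) - 1 - d) * (qe n q (d:ℤ) * hz n q (γ + r - 1 - n - d)) := by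
    rw [sum_guard _ r.toNat n (by omega), sumTri]
    have hcast : ((r.toNat - 1 : ℕ):ℝ) = (r:ℝ) - 1 := by
      have h0 : ((r.toNat - 1 : ℕ):ℤ) = r - 1 := by omega
      exact_mod_cast congrArg (Int.cast : ℤ → ℝ) h0
    conv_rhs => rw [show r.toNat = (r.toNat - 1) + 1 from by omega, Finset.sum_range_succ]
    rw [hcast, show (r:ℝ) - 1 - ((r:ℝ) - 1) = 0 from by ring, zero_mul, add_zero]
  -- Piece 1 (the Cz part)
  have hP1 : ∑ j ∈ Finset.range n, ∑ s ∈ Finset.range r.toNat, ∑ d ∈ Finset.range (j+1),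
        qe n q (s:ℤ) * qe n q (d:ℤ) * Cz n q (γ + r - 1 - n - s - d)
      = ∑ s ∈ Finset.range r.toNat,
          qe n q (s:ℤ) * (((n:ℝ) + ((γ + r - 1 - n - s : ℤ):ℝ)) * hz n q (γ + r - 1 - n - s)) := by
    rw [Finset.sum_comm]
    apply Finset.sum_congr rfl
    intro s _
    rw [sumTri (fun d : ℕ => qe n q (s:ℤ) * qe n q (d:ℤ) * Cz n q (γ + r - 1 - n - s - d)) n]
    have hext : ∑ d ∈ Finset.range n,
        ((n:ℝ) - d) * (qe n q (s:ℤ) * qe n q (d:ℤ) * Cz n q (γ + r - 1 - n - s - d))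
        = ∑ d ∈ Finset.range (n+1),
            ((n:ℝ) - d) * (qe n q (s:ℤ) * qe n q (d:ℤ) * Cz n q (γ + r - 1 - n - s - d)) := by
      rw [Finset.sum_range_succ]
      rw [show ((n:ℝ) - (n:ℕ)) = 0 by push_cast; ring]
      rw [zero_mul, add_zero]
    rw [hext]
    have hfac : ∀ d ∈ Finset.range (n+1),
        ((n:ℝ) - d) * (qe n q (s:ℤ) * qe n q (d:ℤ) * Cz n q (γ + r - 1 - n - s - d))
        = qe n q (s:ℤ) * (((n:ℝ) - d) * (qe n q (d:ℤ) * Cz n q ((γ + r - 1 - n - s) - d))) := by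
      intro d _
      ring
    rw [Finset.sum_congr rfl hfac, ← Finset.mul_sum, Efinal n q (γ + r - 1 - n - s)]
  rw [hP2, hP1, Finset.mul_sum, ← Finset.sum_sub_distrib]
  apply Finset.sum_congr rfl
  intro s hs
  have hsc : ((γ + r - 1 - n - s : ℤ):ℝ) = (γ:ℝ) + (r:ℝ) - 1 - (n:ℝ) - (s:ℝ) := by
    push_cast
    ring
  rw [hsc]
  ring

lemma Ppot_at_n (hn : 1 ≤ n) (γ r : ℤ) (hγ : 0 ≤ γ) (hr1 : 1 ≤ r) (hrn : r ≤ (n:ℤ)) :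
    Ppot n q γ r (n:ℤ) = (if γ = 0 then qe n q (r-1) else 0)
      - qe n q (n:ℤ) * ∑ s ∈ Finset.range r.toNat, qe n q (s:ℤ) * hz n q (γ + r - 1 - n - s) := by
  rw [Ppot_expand n hn γ r hγ hr1 (n:ℤ) (by omega) (by omega) q]
  have hto : ((n:ℤ)).toNat = n := by omega
  rw [hto]
  have hin : ∀ s ∈ Finset.range r.toNat,
      ∑ d ∈ Finset.range n, qe n q (s:ℤ) * (qe n q (d:ℤ) * hz n q (γ + r - 1 - s + n - n - d))
      = qe n q (s:ℤ) * ((if γ + r - 1 - s = 0 then (1:ℝ) else 0)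
          - qe n q (n:ℤ) * hz n q (γ + r - 1 - n - s)) := by
    intro s _
    rw [← Finset.mul_sum]
    congr 1
    have harg : ∀ d : ℕ, γ + r - 1 - s + (n:ℤ) - n - d = (γ + r - 1 - s) - d := by
      intro d; ring
    simp_rw [harg]
    have hpeel := Finset.sum_range_succ (fun d : ℕ => qe n q (d:ℤ) * hz n q ((γ + r - 1 - s) - d)) n
    rw [master n q (γ + r - 1 - s)] at hpeel
    have harg2 : (γ + r - 1 - s) - (n:ℤ) = γ + r - 1 - n - s := by ring
    rw [harg2] at hpeel
    linarith
  rw [Finset.sum_congr rfl hin]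
  have hsplit : ∀ s ∈ Finset.range r.toNat,
      qe n q (s:ℤ) * ((if γ + r - 1 - s = 0 then (1:ℝ) else 0)
          - qe n q (n:ℤ) * hz n q (γ + r - 1 - n - s))
      = (if s = (γ + r - 1).toNat then qe n q (s:ℤ) else 0)
        - qe n q (n:ℤ) * (qe n q (s:ℤ) * hz n q (γ + r - 1 - n - s)) := by
    intro s hs
    have hiff : (γ + r - 1 - s = 0) ↔ (s = (γ + r - 1).toNat) := by omega
    by_cases h : γ + r - 1 - s = 0
    · rw [if_pos h, if_pos (hiff.1 h)]
      ring
    · rw [if_neg h, if_neg (fun hc => h (hiff.2 hc))]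
      ring
  rw [Finset.sum_congr rfl hsplit, Finset.sum_sub_distrib, ← Finset.mul_sum]
  congr 1
  rw [Finset.sum_ite_eq' (Finset.range r.toNat) ((γ + r - 1).toNat) (fun s => qe n q (s:ℤ))]
  by_cases hγ0 : γ = 0
  · rw [if_pos (by simp only [Finset.mem_range]; omega), if_pos hγ0]
    congr 1
    omega
  · rw [if_neg (by simp only [Finset.mem_range]; omega), if_neg hγ0]

end P3

namespace P3
variable (n : ℕ) (q : Fin n → ℝ)

lemma Vpot_rhs_pos (hn : 1 ≤ n) (γ r : ℤ) (hγ : 1 ≤ γ) (hr1 : 1 ≤ r) (hrn : r ≤ (n:ℤ)) :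
    Vpot n q (γ - 1) r
      = -∑ s ∈ Finset.range r.toNat, qe n q (s:ℤ) * hz n q (γ + r - 1 - n - s) := by
  rw [Vpot_eq_Wf n q hn (γ-1) r (by omega) hr1 (by omega)]
  unfold Wf
  congr 1
  apply Finset.sum_congr rfl
  intro d _
  congr 2
  ring

lemma Vpot_rhs_zero (r : ℤ) (hr1 : 1 ≤ r) (hrn : r ≤ (n:ℤ)) :
    Vpot n q (-1) r = qe n q (r-1) * (qe n q (n:ℤ))⁻¹ := by
  unfold Vpot
  rw [if_neg (by omega)]
  have h1 : ((-(-1:ℤ))).toNat = 1 := by norm_num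
  rw [h1]
  have h2 : Vdn n q 1 r = Vdn n q (0+1) r := rfl
  rw [h2]
  simp only [Vdn]
  rw [if_pos ⟨hr1, hrn⟩]
  rw [if_true]
  have h4 : (if r = 1 then (0:ℝ) else if r - 1 = (n:ℤ) then -1 else 0) = 0 := by
    split_ifs with ha hb
    · rfl
    · omega
    · rfl
  rw [h4]
  ring

lemma U_eq_zero (r : ℤ) (hr1 : 1 ≤ r) (hrn : r ≤ (n:ℤ)) :
    ∑ s ∈ Finset.range r.toNat, qe n q (s:ℤ) * hz n q (0 + r - 1 - n - s) = 0 := by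
  apply Finset.sum_eq_zero
  intro s _
  rw [hz_neg n q (by omega : 0 + r - 1 - (n:ℤ) - s < 0), mul_zero]


end P3

namespace P3

/-- The weighted divergence of the basic separable vector
potential `P_r^{(γ)}` equals `(γ − m/2) V_r^{(γ−1)}` on `{q_n ≠ 0}`. -/
theorem weighted_divergence_P (n m : ℕ) (hn : 1 ≤ n) (hm : m ≤ n + 1)
    (γ : ℤ) (hγ : 0 ≤ γ ∧ γ ≤ (n : ℤ) + 1) (r : ℤ) (hr : 1 ≤ r ∧ r ≤ (n : ℤ))
    (q : Fin n → ℝ) (hq : qe n q (n : ℤ) ≠ 0) :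
    (∑ j : Fin n, pd n j (fun y => Ppot n y γ r ((j : ℤ) + 1)) q)
      - ((m : ℝ) / 2) * (qe n q (n : ℤ))⁻¹ * Ppot n q γ r (n : ℤ)
      = ((γ : ℝ) - (m : ℝ) / 2) * Vpot n q (γ - 1) r := by
  obtain ⟨hγ0, hγn⟩ := hγ
  obtain ⟨hr1, hrn⟩ := hr
  rw [div_total n q hn γ r hγ0 hr1 hrn, Ppot_at_n n q hn γ r hγ0 hr1 hrn]
  by_cases hg : γ = 0
  · subst hg
    rw [if_pos rfl, U_eq_zero n q r hr1 hrn,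
      show ((0:ℤ) - 1) = -1 from by ring, Vpot_rhs_zero n q r hr1 hrn]
    push_cast
    ring
  · rw [if_neg hg, Vpot_rhs_pos n q hn γ r (by omega) hr1 hrn]
    have hinv : (qe n q (n:ℤ))⁻¹ * qe n q (n:ℤ) = 1 := inv_mul_cancel₀ hq
    set U := ∑ s ∈ Finset.range r.toNat, qe n q (s:ℤ) * hz n q (γ + r - 1 - n - s) with hU
    have expand : ((m:ℝ)/2) * (qe n q (n:ℤ))⁻¹ * ((0:ℝ) - qe n q (n:ℤ) * U)
        = -(((m:ℝ)/2) * (((qe n q (n:ℤ))⁻¹ * qe n q (n:ℤ)) * U)) := by ring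
    rw [expand, hinv]
    ring

end P3
end
end
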